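/- If nonzero polynomials r₁, …, rₙ in a polynomial ring over a field admit a monomial order with respect to which their leading monomials are pairwise coprime, then r₁, …, rₙ is a regular sequence. -/

import Mathlib

open MvPolynomial

namespace Stmt12

/-- Bundled hypotheses of an admissible monomial (strict) order. -/
structure Adm {m : ℕ} (lt : (Fin m →₀ ℕ) → (Fin m →₀ ℕ) → Prop) : Prop where
  tri : ∀ a b, lt a b ∨ a = b ∨ lt b a
  tr : ∀ {a b c}, lt a b → lt b c → lt a c
  irr : ∀ a, ¬ lt a a
  add : ∀ a b c, lt a b → lt (a + c) (b + c)
  zer : ∀ a, a ≠ 0 → lt 0 a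

variable {m : ℕ} {lt : (Fin m →₀ ℕ) → (Fin m →₀ ℕ) → Prop}

/-- weak (reflexive) version of `lt` -/
def wle (lt : (Fin m →₀ ℕ) → (Fin m →₀ ℕ) → Prop) (a b : Fin m →₀ ℕ) : Prop :=
  lt a b ∨ a = b

namespace Adm

variable (H : Adm lt) {a b c d : Fin m →₀ ℕ}
include H

lemma wle_refl (a : Fin m →₀ ℕ) : wle lt a a := Or.inr rfl

lemma wle_lt_trans (h1 : wle lt a b) (h2 : lt b c) : lt a c := by
  rcases h1 with h | rfl
  · exact H.tr h h2
  · exact h2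

lemma lt_wle_trans (h1 : lt a b) (h2 : wle lt b c) : lt a c := by
  rcases h2 with h | rfl
  · exact H.tr h1 h
  · exact h1

lemma wle_trans (h1 : wle lt a b) (h2 : wle lt b c) : wle lt a c := by
  rcases h2 with h | rfl
  · exact Or.inl (H.wle_lt_trans h1 h)
  · exact h1

lemma wle_antisymm (h1 : wle lt a b) (h2 : wle lt b a) : a = b := by
  rcases h1 with h | rfl
  · rcases h2 with h' | rfl
    · exact absurd (H.tr h h') (H.irr a)
    · rfl
  · rfl

lemma lt_add_right (h : lt a b) (c : Fin m →₀ ℕ) : lt (a + c) (b + c) := H.add a b c h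

lemma lt_add_left (h : lt a b) (c : Fin m →₀ ℕ) : lt (c + a) (c + b) := by
  rw [add_comm c a, add_comm c b]; exact H.add a b c h

lemma wle_add (h1 : wle lt a b) (h2 : wle lt c d) : wle lt (a + c) (b + d) := by
  rcases h1 with h | rfl
  · rcases h2 with h' | rfl
    · exact Or.inl (H.tr (H.lt_add_right h c) (H.lt_add_left h' b))
    · exact Or.inl (H.lt_add_right h c)
  · rcases h2 with h' | rfl
    · exact Or.inl (H.lt_add_left h' a)
    · exact Or.inr rfl

/-- pointwise domination implies the order relation -/
lemma wle_of_le (h : a ≤ b) : wle lt a b := by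
  obtain ⟨c, rfl⟩ := le_iff_exists_add.mp h
  rcases eq_or_ne c 0 with rfl | hc
  · exact Or.inr (by simp)
  · exact Or.inl <| by
      have := H.add 0 c a (H.zer c hc)
      simpa [add_comm] using this

/-- Dickson's lemma: `lt` is well-founded. -/
lemma wf : WellFounded lt := by
  letI : IsIrrefl (Fin m →₀ ℕ) lt := ⟨H.irr⟩
  letI : IsTrans (Fin m →₀ ℕ) lt := ⟨fun _ _ _ h h' => H.tr h h'⟩
  letI : IsStrictOrder (Fin m →₀ ℕ) lt := { }
  rw [RelEmbedding.wellFounded_iff_isEmpty]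
  constructor
  intro f
  have chain : ∀ p q : ℕ, p < q → lt (f q) (f p) := by
    intro p q hpq
    induction q with
    | zero => omega
    | succ q ih =>
      have hstep : lt (f (q + 1)) (f q) := f.map_rel_iff.2 (Nat.lt_succ_self q)
      rcases Nat.lt_or_ge p q with h | h
      · exact H.tr hstep (ih h)
      · have : p = q := by omega
        subst this; exact hstep
  obtain ⟨i, j, hij, hle⟩ := (wellQuasiOrdered_le (α := Fin m →₀ ℕ)) f
  have h1 : lt (f j) (f i) := chain i j hij
  rcases H.wle_of_le hle with h2 | h2
  · exact H.irr _ (H.tr h1 h2)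
  · rw [h2] at h1; exact H.irr _ h1

/-- every nonempty finset of exponents has a maximum -/
lemma exists_max : ∀ s : Finset (Fin m →₀ ℕ), s.Nonempty →
    ∃ μ ∈ s, ∀ ν ∈ s, ν ≠ μ → lt ν μ := by
  intro s
  classical
  induction s using Finset.induction_on with
  | empty => intro hs; exact absurd hs (by simp)
  | @insert a t ha ih =>
    intro _
    rcases t.eq_empty_or_nonempty with rfl | ht
    · refine ⟨a, Finset.mem_insert_self a _, ?_⟩
      intro ν hν hne
      rcases Finset.mem_insert.1 hν with rfl | h
      · exact absurd rfl hne
      · simp at h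
    · obtain ⟨μ, hμt, hmax⟩ := ih ht
      rcases H.tri a μ with h | h | h
      · refine ⟨μ, Finset.mem_insert_of_mem hμt, ?_⟩
        intro ν hν hne
        rcases Finset.mem_insert.1 hν with rfl | hν'
        · exact h
        · exact hmax ν hν' hne
      · refine ⟨μ, Finset.mem_insert_of_mem hμt, ?_⟩
        intro ν hν hne
        rcases Finset.mem_insert.1 hν with rfl | hν'
        · exact absurd h hne
        · exact hmax ν hν' hne
      · refine ⟨a, Finset.mem_insert_self a _, ?_⟩
        intro ν hν hne
        rcases Finset.mem_insert.1 hν with rfl | hν'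
        · exact absurd rfl hne
        · rcases eq_or_ne ν μ with rfl | hνμ
          · exact h
          · exact H.tr (hmax ν hν' hνμ) h

end Adm

variable {K : Type*} [Field K]

open Classical in
/-- the leading exponent of a polynomial (junk value `0` for `p = 0`) -/
noncomputable def deg (H : Adm lt) (p : MvPolynomial (Fin m) K) : Fin m →₀ ℕ :=
  if h : p = 0 then 0
  else (H.exists_max p.support (by rwa [MvPolynomial.support_nonempty])).choose

variable (H : Adm lt)
include H

lemma deg_mem {p : MvPolynomial (Fin m) K} (hp : p ≠ 0) : deg H p ∈ p.support := by
  rw [deg, dif_neg hp]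
  exact (H.exists_max p.support (by rwa [MvPolynomial.support_nonempty])).choose_spec.1

lemma deg_max {p : MvPolynomial (Fin m) K} (hp : p ≠ 0) :
    ∀ ν ∈ p.support, ν ≠ deg H p → lt ν (deg H p) := by
  rw [deg, dif_neg hp]
  exact (H.exists_max p.support (by rwa [MvPolynomial.support_nonempty])).choose_spec.2

lemma coeff_deg_ne_zero {p : MvPolynomial (Fin m) K} (hp : p ≠ 0) :
    coeff (deg H p) p ≠ 0 :=
  (mem_support_iff).1 (deg_mem H hp)

lemma le_deg {p : MvPolynomial (Fin m) K} {ν : Fin m →₀ ℕ} (hν : ν ∈ p.support) :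
    wle lt ν (deg H p) := by
  have hp : p ≠ 0 := by
    intro h; subst h; simp at hν
  rcases eq_or_ne ν (deg H p) with rfl | hne
  · exact Or.inr rfl
  · exact Or.inl (deg_max H hp ν hν hne)

lemma deg_unique {p : MvPolynomial (Fin m) K} {μ : Fin m →₀ ℕ} (hμ : μ ∈ p.support)
    (hmax : ∀ ν ∈ p.support, ν ≠ μ → lt ν μ) : deg H p = μ := by
  have hp : p ≠ 0 := by intro h; subst h; simp at hμ
  rcases eq_or_ne (deg H p) μ with h | h
  · exact h
  · exact absurd (H.tr (hmax _ (deg_mem H hp) h) (deg_max H hp μ hμ (Ne.symm h)))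
      (H.irr _)

set_option maxHeartbeats 1000000 in
lemma coeff_mul_deg {p q : MvPolynomial (Fin m) K} (hp : p ≠ 0) (hq : q ≠ 0) :
    coeff (deg H p + deg H q) (p * q) = coeff (deg H p) p * coeff (deg H q) q := by
  rw [coeff_mul]
  apply Finset.sum_eq_single (deg H p, deg H q)
  · rintro ⟨a, b⟩ hab hne
    have hsum : a + b = deg H p + deg H q := Finset.HasAntidiagonal.mem_antidiagonal.1 hab
    by_contra hc
    have ha : a ∈ p.support := mem_support_iff.2 fun h => hc (by simp [h])
    have hb : b ∈ q.support := mem_support_iff.2 fun h => hc (by simp [h])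
    rcases eq_or_ne a (deg H p) with rfl | hne'
    · have : b = deg H q := by
        have := hsum; exact add_left_cancel this
      exact hne (by simp [this])
    · have h1 : lt a (deg H p) := deg_max H hp a ha hne'
      have h2 : wle lt b (deg H q) := le_deg H hb
      have : lt (a + b) (deg H p + deg H q) :=
        H.lt_wle_trans (H.lt_add_right h1 b) (H.wle_add (H.wle_refl _) h2)
      rw [hsum] at this
      exact H.irr _ this
  · intro h
    rw [Finset.HasAntidiagonal.mem_antidiagonal] at h
    exact absurd rfl h

lemma mul_ne_zero' {p q : MvPolynomial (Fin m) K} (hp : p ≠ 0) (hq : q ≠ 0) :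
    p * q ≠ 0 := by
  intro h
  have := coeff_mul_deg H hp hq
  rw [h] at this
  simp only [coeff_zero] at this
  exact mul_ne_zero (coeff_deg_ne_zero H hp) (coeff_deg_ne_zero H hq) this.symm

lemma deg_mul {p q : MvPolynomial (Fin m) K} (hp : p ≠ 0) (hq : q ≠ 0) :
    deg H (p * q) = deg H p + deg H q := by
  classical
  apply deg_unique
  · rw [mem_support_iff, coeff_mul_deg H hp hq]
    exact mul_ne_zero (coeff_deg_ne_zero H hp) (coeff_deg_ne_zero H hq)
  · intro ν hν hne
    obtain ⟨a, ha, b, hb, rfl⟩ := Finset.mem_add.1 (MvPolynomial.support_mul p q hν)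
    have h1 : wle lt a (deg H p) := le_deg H ha
    have h2 : wle lt b (deg H q) := le_deg H hb
    rcases H.wle_add h1 h2 with h | h
    · exact h
    · exact absurd h hne

lemma support_mul_le {p q : MvPolynomial (Fin m) K} (hp : p ≠ 0) (hq : q ≠ 0)
    {ν : Fin m →₀ ℕ} (hν : ν ∈ (p * q).support) : wle lt ν (deg H p + deg H q) := by
  rw [← deg_mul H hp hq]
  exact le_deg H hν

lemma deg_monomial {e : Fin m →₀ ℕ} {a : K} (ha : a ≠ 0) :
    deg H (monomial e a : MvPolynomial (Fin m) K) = e := by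
  classical
  apply deg_unique
  · rw [mem_support_iff, coeff_monomial, if_pos rfl]; exact ha
  · intro ν hν hne
    rw [MvPolynomial.support_monomial, if_neg ha] at hν
    simp at hν
    exact absurd hν hne

end Stmt12

section Main

open Stmt12

variable {K : Type*} [Field K] {m n : ℕ}
  {lt : (Fin m →₀ ℕ) → (Fin m →₀ ℕ) → Prop}

/-- the ideal generated by `r j` for `j < k` -/
noncomputable def Ik (r : Fin n → MvPolynomial (Fin m) K) (k : ℕ) :
    Ideal (MvPolynomial (Fin m) K) :=
  Ideal.span (Set.range fun j : Fin n => if (j : ℕ) < k then r j else 0)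

lemma r_mem_Ik {r : Fin n → MvPolynomial (Fin m) K} {k : ℕ} {j : Fin n}
    (hj : (j : ℕ) < k) : r j ∈ Ik r k := by
  have : r j = (fun j : Fin n => if (j : ℕ) < k then r j else 0) j := by simp [hj]
  rw [this]
  exact Ideal.subset_span ⟨j, rfl⟩

lemma mem_Ik_iff {r : Fin n → MvPolynomial (Fin m) K} {k : ℕ}
    {h : MvPolynomial (Fin m) K} :
    h ∈ Ik r k ↔ ∃ g : Fin n → MvPolynomial (Fin m) K,
      (∀ j, g j ≠ 0 → (j : ℕ) < k) ∧ h = ∑ j, g j * r j := by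
  constructor
  · intro hh
    obtain ⟨c, hc⟩ := (Submodule.mem_span_range_iff_exists_fun _).1 hh
    refine ⟨fun j => if (j : ℕ) < k then c j else 0, fun j hj => ?_, ?_⟩
    · by_contra hcon; exact hj (by simp [hcon])
    · rw [← hc]
      apply Finset.sum_congr rfl
      intro j _
      by_cases hj : (j : ℕ) < k <;> simp [hj]
  · rintro ⟨g, hg, rfl⟩
    apply Ideal.sum_mem
    intro j _
    rcases eq_or_ne (g j) 0 with h0 | h0
    · rw [h0, zero_mul]; exact zero_mem _
    · exact Ideal.mul_mem_left _ _ (r_mem_Ik (hg j h0))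

/-- helper for modifying one coordinate of a representation -/
lemma sum_update {R : Type*} [CommRing R] {n : ℕ} (v g : Fin n → R) (i : Fin n) (x : R) :
    ∑ j, Function.update g i x j * v j = (∑ j, g j * v j) + (x - g i) * v i := by
  classical
  have h1 : ∀ j, Function.update g i x j * v j
      = Function.update (fun j => g j * v j) i (x * v i) j := by
    intro j
    by_cases hj : j = i
    · subst hj; simp
    · simp [Function.update_of_ne hj]
  rw [Finset.sum_congr rfl fun j _ => h1 j,
    Finset.sum_update_of_mem (Finset.mem_univ i)]
  have h2 : ∑ j, g j * v j = g i * v i + ∑ j ∈ Finset.univ.erase i, g j * v j :=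
    (Finset.add_sum_erase _ _ (Finset.mem_univ i)).symm
  rw [Finset.sdiff_singleton_eq_erase, h2]
  ring

open Classical in
theorem stmt12_key2 (H : Adm lt)
    (r : Fin n → MvPolynomial (Fin m) K) (hr : ∀ i, r i ≠ 0)
    (lm : Fin n → (Fin m →₀ ℕ))
    (hlm : ∀ i, lm i ∈ (r i).support ∧ ∀ μ ∈ (r i).support, μ ≠ lm i → lt μ (lm i))
    (hcop : ∀ i j, i ≠ j → ∀ s : Fin m, lm i s = 0 ∨ lm j s = 0)
    (k : ℕ) :
    ∀ δ : Fin m →₀ ℕ, ∀ t : ℕ, ∀ (g : Fin n → MvPolynomial (Fin m) K)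
      (h : MvPolynomial (Fin m) K),
      (∀ j, g j ≠ 0 → (j : ℕ) < k) → h = ∑ j, g j * r j →
      (∀ j, g j ≠ 0 → wle lt (deg H (g j) + lm j) δ) →
      (Finset.univ.filter fun j => g j ≠ 0 ∧ deg H (g j) + lm j = δ).card ≤ t →
      h ≠ 0 → ∃ j : Fin n, (j : ℕ) < k ∧ lm j ≤ deg H h := by
  classical
  have hdegr : ∀ j, deg H (r j) = lm j := fun j => deg_unique H (hlm j).1 (hlm j).2
  intro δ
  induction δ using WellFounded.induction H.wf with
  | _ δ IHδ =>
  -- shared step when no `j` attains the bound `δ`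
  have base : ∀ (g : Fin n → MvPolynomial (Fin m) K) (h : MvPolynomial (Fin m) K),
      (∀ j, g j ≠ 0 → (j : ℕ) < k) → h = ∑ j, g j * r j →
      (∀ j, g j ≠ 0 → wle lt (deg H (g j) + lm j) δ) →
      (∀ j, g j ≠ 0 → deg H (g j) + lm j ≠ δ) →
      h ≠ 0 → ∃ j : Fin n, (j : ℕ) < k ∧ lm j ≤ deg H h := by
    intro g h hgk hsum hbd hJ hne
    have hex : ∃ j, g j ≠ 0 := by
      by_contra h'
      push_neg at h'
      exact hne (by rw [hsum]; exact Finset.sum_eq_zero fun j _ => by rw [h' j, zero_mul])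
    obtain ⟨j₂, hj₂⟩ := hex
    set D : Finset (Fin m →₀ ℕ) :=
      (Finset.univ.filter fun j => g j ≠ 0).image fun j => deg H (g j) + lm j with hD
    have hDne : D.Nonempty := ⟨deg H (g j₂) + lm j₂,
      Finset.mem_image.2 ⟨j₂, by simp [hj₂], rfl⟩⟩
    obtain ⟨δ', hδ'D, hδ'max⟩ := H.exists_max D hDne
    obtain ⟨j₃, hj₃, hj₃eq⟩ := Finset.mem_image.1 hδ'D
    have hj₃ne : g j₃ ≠ 0 := by simpa using hj₃
    have hlt : lt δ' δ := by
      rcases hbd j₃ hj₃ne with h' | h'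
      · rw [← hj₃eq]; exact h'
      · exact absurd h' (hJ j₃ hj₃ne)
    refine IHδ δ' hlt _ g h hgk hsum ?_ le_rfl hne
    intro j hj
    have hmem : deg H (g j) + lm j ∈ D := Finset.mem_image.2 ⟨j, by simp [hj], rfl⟩
    rcases eq_or_ne (deg H (g j) + lm j) δ' with h' | h'
    · exact Or.inr h'
    · exact Or.inl (hδ'max _ hmem h')
  intro t
  induction t with
  | zero =>
    intro g h hgk hsum hbd hcard hne
    refine base g h hgk hsum hbd ?_ hne
    intro j hj hje
    have : j ∈ Finset.univ.filter fun j => g j ≠ 0 ∧ deg H (g j) + lm j = δ := by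
      simp [hj, hje]
    have := Finset.card_pos.2 ⟨j, this⟩
    omega
  | succ t IHt =>
    intro g h hgk hsum hbd hcard hne
    set J : Finset (Fin n) :=
      Finset.univ.filter fun j => g j ≠ 0 ∧ deg H (g j) + lm j = δ with hJdef
    rcases J.eq_empty_or_nonempty with hJe | ⟨j₀, hj₀J⟩
    · refine base g h hgk hsum hbd ?_ hne
      intro j hj hje
      have : j ∈ J := by simp [hJdef, hj, hje]
      rw [hJe] at this; simp at this
    have hj₀ : g j₀ ≠ 0 ∧ deg H (g j₀) + lm j₀ = δ := by
      simpa [hJdef] using hj₀J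
    -- every exponent of h is below δ
    have hsupp : ∀ ν ∈ h.support, wle lt ν δ := by
      intro ν hν
      have hcν : coeff ν h ≠ 0 := mem_support_iff.1 hν
      rw [hsum, coeff_sum] at hcν
      obtain ⟨j, _, hj⟩ := Finset.exists_ne_zero_of_sum_ne_zero hcν
      have hgj : g j ≠ 0 := fun h0 => hj (by simp [h0])
      have hν' : ν ∈ (g j * r j).support := mem_support_iff.2 hj
      have := support_mul_le H hgj (hr j) hν'
      rw [hdegr j] at this
      exact H.wle_trans this (hbd j hgj)
    by_cases hδc : coeff δ h ≠ 0
    · -- δ is the leading exponent of h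
      have hδh : deg H h = δ := deg_unique H (mem_support_iff.2 hδc)
        (fun ν hν hne' => by
          rcases hsupp ν hν with h' | h'
          · exact h'
          · exact absurd h' hne')
      refine ⟨j₀, hgk j₀ hj₀.1, ?_⟩
      rw [hδh, ← hj₀.2]
      exact le_add_self
    · push_neg at hδc
      -- leading coefficients cancel, so there is a second index in J
      have hcoefftop : ∀ j ∈ J, coeff δ (g j * r j)
          = coeff (deg H (g j)) (g j) * coeff (lm j) (r j) := by
        intro j hj
        have hj' : g j ≠ 0 ∧ deg H (g j) + lm j = δ := by simpa [hJdef] using hj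
        rw [← hj'.2, ← hdegr j]
        exact coeff_mul_deg H hj'.1 (hr j)
      have hcoeff0 : ∀ j ∉ J, coeff δ (g j * r j) = 0 := by
        intro j hj
        rcases eq_or_ne (g j) 0 with h0 | h0
        · simp [h0]
        · have hne' : deg H (g j) + lm j ≠ δ := by
            intro he; exact hj (by simp [hJdef, h0, he])
          have hlt' : lt (deg H (g j) + lm j) δ := by
            rcases hbd j h0 with h' | h'
            · exact h'
            · exact absurd h' hne'
          by_contra hc
          have hmem : δ ∈ (g j * r j).support := mem_support_iff.2 hc
          have := support_mul_le H h0 (hr j) hmem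
          rw [hdegr j] at this
          exact H.irr δ (H.wle_lt_trans this hlt')
      have hsum0 : ∑ j ∈ J, coeff (deg H (g j)) (g j) * coeff (lm j) (r j) = 0 := by
        have h1 : ∑ j, coeff δ (g j * r j) = 0 := by
          rw [← coeff_sum, ← hsum, hδc]
        calc ∑ j ∈ J, coeff (deg H (g j)) (g j) * coeff (lm j) (r j)
            = ∑ j ∈ J, coeff δ (g j * r j) := (Finset.sum_congr rfl hcoefftop).symm
          _ = ∑ j, coeff δ (g j * r j) :=
              Finset.sum_subset (Finset.subset_univ J) (fun j _ hj => hcoeff0 j hj)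
          _ = 0 := h1
      have hex1 : ∃ j₁ ∈ J, j₁ ≠ j₀ := by
        by_contra hc
        push_neg at hc
        have hJeq : J = {j₀} := by
          apply Finset.eq_singleton_iff_unique_mem.2
          exact ⟨hj₀J, fun x hx => hc x hx⟩
        rw [hJeq, Finset.sum_singleton] at hsum0
        exact mul_ne_zero (coeff_deg_ne_zero H hj₀.1)
          (mem_support_iff.1 (hlm j₀).1) hsum0
      obtain ⟨j₁, hj₁J, hj₁ne⟩ := hex1
      have hj₁ : g j₁ ≠ 0 ∧ deg H (g j₁) + lm j₁ = δ := by simpa [hJdef] using hj₁J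
      -- notation
      set m₀ := lm j₀ with hm₀
      set m₁ := lm j₁ with hm₁
      set ν₀ := deg H (g j₀) with hν₀
      set ν₁ := deg H (g j₁) with hν₁
      set c := coeff ν₀ (g j₀) with hc
      set a₁ := coeff m₁ (r j₁) with ha₁def
      have hcne : c ≠ 0 := coeff_deg_ne_zero H hj₀.1
      have ha₁ : a₁ ≠ 0 := mem_support_iff.1 (hlm j₁).1
      have hps0 : ∀ s, ν₀ s + m₀ s = δ s := by
        intro s
        have := DFunLike.congr_fun hj₀.2 s
        simpa using this
      have hps1 : ∀ s, ν₁ s + m₁ s = δ s := by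
        intro s
        have := DFunLike.congr_fun hj₁.2 s
        simpa using this
      have hm01 : ∀ s, m₀ s + m₁ s ≤ δ s := by
        intro s
        rcases hcop j₀ j₁ (Ne.symm hj₁ne) s with h' | h'
        · rw [hm₀, h']; simpa using (hps1 s).le.trans' (by omega)
        · rw [hm₁, h']; simpa using (hps0 s).le.trans' (by omega)
      set e : Fin m →₀ ℕ := δ - (m₀ + m₁) with he
      have hes : ∀ s, e s = δ s - (m₀ s + m₁ s) := by
        intro s; rw [he, Finsupp.tsub_apply, Finsupp.add_apply]
      have he1 : e + m₁ = ν₀ := by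
        ext s
        rw [Finsupp.add_apply, hes s]
        have := hps0 s; have := hm01 s; omega
      have he3 : (e + m₀) + m₁ = δ := by
        ext s
        rw [Finsupp.add_apply, Finsupp.add_apply, hes s]
        have := hm01 s; omega
      set r₁' := r j₁ - monomial m₁ a₁ with hr₁'
      set q : MvPolynomial (Fin m) K := monomial e (c / a₁) with hq
      have hqa : c / a₁ ≠ 0 := div_ne_zero hcne ha₁
      set A := g j₀ - monomial ν₀ c - q * r₁' with hA
      set B := g j₁ + q * r j₀ with hB
      set g' := Function.update (Function.update g j₀ A) j₁ B with hg'
      have hg'j₀ : g' j₀ = A := by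
        rw [hg', Function.update_of_ne (Ne.symm hj₁ne), Function.update_self]
      have hg'j₁ : g' j₁ = B := by rw [hg', Function.update_self]
      have hg'other : ∀ j, j ≠ j₀ → j ≠ j₁ → g' j = g j := by
        intro j h0 h1
        rw [hg', Function.update_of_ne h1, Function.update_of_ne h0]
      -- support of r₁' is strictly below m₁
      have hsuppr₁' : ∀ ω ∈ r₁'.support, lt ω m₁ := by
        intro ω hω
        have hcω : coeff ω r₁' ≠ 0 := mem_support_iff.1 hω
        rw [hr₁'] at hcω
        simp only [coeff_sub, coeff_monomial] at hcω
        rcases eq_or_ne m₁ ω with rfl | hne'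
        · rw [if_pos rfl] at hcω; simp at hcω; exact absurd (sub_self _) hcω
        · rw [if_neg hne'] at hcω
          simp only [sub_zero] at hcω
          exact (hlm j₁).2 ω (mem_support_iff.2 hcω) (Ne.symm hne')
      -- support of q * r₁' is strictly below ν₀
      have hsuppqr : ∀ ν ∈ (q * r₁').support, lt ν ν₀ := by
        intro ν hν
        have hr₁'ne : r₁' ≠ 0 := by
          intro h0; rw [h0, mul_zero] at hν; simp at hν
        have h1 : wle lt ν (deg H q + deg H r₁') :=
          support_mul_le H (by rw [hq]; exact fun hc0 => hqa (by
            simpa using (MvPolynomial.monomial_eq_zero).1 hc0)) hr₁'ne hν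
        rw [hq, deg_monomial H hqa] at h1
        have h2 : lt (deg H r₁') m₁ := hsuppr₁' _ (deg_mem H hr₁'ne)
        have h3 : lt (e + deg H r₁') (e + m₁) := H.lt_add_left h2 e
        rw [he1] at h3
        exact H.wle_lt_trans h1 h3
      -- support of A is strictly below ν₀
      have hsuppA : ∀ ν ∈ A.support, lt ν ν₀ := by
        intro ν hν
        have hcν : coeff ν A ≠ 0 := mem_support_iff.1 hν
        rw [hA] at hcν
        simp only [coeff_sub, coeff_monomial] at hcν
        by_contra hcon
        have hν0 : ν ≠ ν₀ := by
          intro h0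
          subst h0
          rw [if_pos rfl] at hcν
          have hq0 : coeff ν₀ (q * r₁') = 0 := by
            by_contra hc0
            exact H.irr ν₀ (hsuppqr ν₀ (mem_support_iff.2 hc0))
          rw [hq0] at hcν
          apply hcν
          rw [← hc]
          ring
        rw [if_neg (Ne.symm hν0)] at hcν
        have hq0 : coeff ν (q * r₁') = 0 := by
          by_contra hc0
          exact hcon (hsuppqr ν (mem_support_iff.2 hc0))
        have hgν : coeff ν (g j₀) = 0 := by
          by_contra hc0
          rcases le_deg H (mem_support_iff.2 hc0) with h' | h'
          · exact hcon (hν₀ ▸ h')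
          · exact hν0 (hν₀ ▸ h')
        rw [hgν, hq0] at hcν
        simp at hcν
      -- support of B: adding m₁ stays ≼ δ
      have hsuppB : ∀ ν ∈ B.support, wle lt (ν + m₁) δ := by
        intro ν hν
        have hcν : coeff ν B ≠ 0 := mem_support_iff.1 hν
        rw [hB, coeff_add] at hcν
        have : coeff ν (g j₁) ≠ 0 ∨ coeff ν (q * r j₀) ≠ 0 := by
          by_contra hc0
          push_neg at hc0
          rw [hc0.1, hc0.2] at hcν; simp at hcν
        rcases this with h' | h'
        · have h1 : wle lt ν ν₁ := hν₁ ▸ le_deg H (mem_support_iff.2 h')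
          have := H.wle_add h1 (H.wle_refl m₁)
          rwa [hj₁.2] at this
        · have hqne : q ≠ 0 := by
            rw [hq]; exact fun hc0 => hqa (by
              simpa using (MvPolynomial.monomial_eq_zero).1 hc0)
          have h1 : wle lt ν (deg H q + deg H (r j₀)) :=
            support_mul_le H hqne (hr j₀) (mem_support_iff.2 h')
          rw [hq, deg_monomial H hqa, hdegr j₀] at h1
          have := H.wle_add h1 (H.wle_refl m₁)
          rwa [he3] at this
      -- the new representation still sums to h
      have hsum' : h = ∑ j, g' j * r j := by
        rw [hg']
        rw [sum_update (v := r)]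
        have hupd : Function.update g j₀ A j₁ = g j₁ :=
          Function.update_of_ne hj₁ne _ _
        rw [sum_update (v := r), hupd]
        have hkey : q * monomial m₁ a₁ = monomial ν₀ c := by
          rw [hq, MvPolynomial.monomial_mul, he1, div_mul_cancel₀ _ ha₁]
        have hzero : (A - g j₀) * r j₀ + (B - g j₁) * r j₁ = 0 := by
          have hexp : (A - g j₀) * r j₀ + (B - g j₁) * r j₁
              = (q * monomial m₁ a₁ - monomial ν₀ c) * r j₀ := by
            rw [hA, hB, hr₁']; ring
          rw [hexp, hkey]; ring
        rw [hsum]; linear_combination -hzero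
      -- conditions for the new representation
      have hgk' : ∀ j, g' j ≠ 0 → (j : ℕ) < k := by
        intro j hj
        rcases eq_or_ne j j₀ with rfl | h0
        · exact hgk j hj₀.1
        rcases eq_or_ne j j₁ with rfl | h1
        · exact hgk j hj₁.1
        · rw [hg'other j h0 h1] at hj; exact hgk j hj
      have hbd' : ∀ j, g' j ≠ 0 → wle lt (deg H (g' j) + lm j) δ := by
        intro j hj
        rcases eq_or_ne j j₀ with rfl | h0
        · rw [hg'j₀] at hj ⊢
          have h1 : lt (deg H A) ν₀ := hsuppA _ (deg_mem H hj)
          have h2 : lt (deg H A + m₀) (ν₀ + m₀) := H.lt_add_right h1 m₀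
          rw [hj₀.2] at h2
          exact Or.inl h2
        rcases eq_or_ne j j₁ with rfl | h1
        · rw [hg'j₁] at hj ⊢
          exact hsuppB _ (deg_mem H hj)
        · rw [hg'other j h0 h1] at hj ⊢
          exact hbd j hj
      -- the attaining set shrinks
      have hJ' : (Finset.univ.filter fun j => g' j ≠ 0 ∧ deg H (g' j) + lm j = δ)
          ⊆ J.erase j₀ := by
        intro j hj
        have hj' : g' j ≠ 0 ∧ deg H (g' j) + lm j = δ := by simpa using hj
        rcases eq_or_ne j j₀ with rfl | h0
        · exfalso
          rw [hg'j₀] at hj'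
          have h1 : lt (deg H A) ν₀ := hsuppA _ (deg_mem H hj'.1)
          have h2 : lt (deg H A + m₀) (ν₀ + m₀) := H.lt_add_right h1 m₀
          rw [hj₀.2, hj'.2] at h2
          exact H.irr δ h2
        rcases eq_or_ne j j₁ with rfl | h1
        · exact Finset.mem_erase.2 ⟨h0, hj₁J⟩
        · rw [hg'other j h0 h1] at hj'
          exact Finset.mem_erase.2 ⟨h0, by simp [hJdef, hj'.1, hj'.2]⟩
      have hcard' :
          (Finset.univ.filter fun j => g' j ≠ 0 ∧ deg H (g' j) + lm j = δ).card ≤ t := by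
        have h1 := Finset.card_le_card hJ'
        have h2 : (J.erase j₀).card = J.card - 1 := Finset.card_erase_of_mem hj₀J
        have h3 : J.card ≤ t + 1 := hcard
        have h4 : 1 ≤ J.card := Finset.card_pos.2 ⟨j₀, hj₀J⟩
        omega
      exact IHt g' h hgk' hsum' hbd' hcard' hne

open Classical in
theorem stmt12_key2' (H : Adm lt)
    (r : Fin n → MvPolynomial (Fin m) K) (hr : ∀ i, r i ≠ 0)
    (lm : Fin n → (Fin m →₀ ℕ))
    (hlm : ∀ i, lm i ∈ (r i).support ∧ ∀ μ ∈ (r i).support, μ ≠ lm i → lt μ (lm i))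
    (hcop : ∀ i j, i ≠ j → ∀ s : Fin m, lm i s = 0 ∨ lm j s = 0)
    (k : ℕ) {h : MvPolynomial (Fin m) K} (hm : h ∈ Ik r k) (hne : h ≠ 0) :
    ∃ j : Fin n, (j : ℕ) < k ∧ lm j ≤ deg H h := by
  classical
  obtain ⟨g, hgk, hsum⟩ := mem_Ik_iff.1 hm
  have hex : ∃ j, g j ≠ 0 := by
    by_contra h'
    push_neg at h'
    exact hne (by rw [hsum]; exact Finset.sum_eq_zero fun j _ => by rw [h' j, zero_mul])
  obtain ⟨j₂, hj₂⟩ := hex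
  set D : Finset (Fin m →₀ ℕ) :=
    (Finset.univ.filter fun j => g j ≠ 0).image fun j => deg H (g j) + lm j with hD
  have hDne : D.Nonempty := ⟨deg H (g j₂) + lm j₂,
    Finset.mem_image.2 ⟨j₂, by simp [hj₂], rfl⟩⟩
  obtain ⟨δ, hδD, hδmax⟩ := H.exists_max D hDne
  refine stmt12_key2 H r hr lm hlm hcop k δ
    (Finset.univ.filter fun j => g j ≠ 0 ∧ deg H (g j) + lm j = δ).card g h hgk hsum
    ?_ le_rfl hne
  intro j hj
  have hmem : deg H (g j) + lm j ∈ D := Finset.mem_image.2 ⟨j, by simp [hj], rfl⟩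
  rcases eq_or_ne (deg H (g j) + lm j) δ with h' | h'
  · exact Or.inr h'
  · exact Or.inl (hδmax _ hmem h')

theorem stmt12_key3 (H : Adm lt)
    (r : Fin n → MvPolynomial (Fin m) K) (hr : ∀ i, r i ≠ 0)
    (lm : Fin n → (Fin m →₀ ℕ))
    (hlm : ∀ i, lm i ∈ (r i).support ∧ ∀ μ ∈ (r i).support, μ ≠ lm i → lt μ (lm i))
    (hcop : ∀ i j, i ≠ j → ∀ s : Fin m, lm i s = 0 ∨ lm j s = 0)
    (i : Fin n) :
    ∀ f : MvPolynomial (Fin m) K, r i * f ∈ Ik r (i : ℕ) → f ∈ Ik r (i : ℕ) := by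
  classical
  have hdegr : ∀ j, deg H (r j) = lm j := fun j => deg_unique H (hlm j).1 (hlm j).2
  suffices hs : ∀ δ : Fin m →₀ ℕ, ∀ f : MvPolynomial (Fin m) K,
      (∀ ν ∈ f.support, wle lt ν δ) → r i * f ∈ Ik r (i : ℕ) → f ∈ Ik r (i : ℕ) by
    intro f hf
    rcases eq_or_ne f 0 with rfl | h0
    · exact zero_mem _
    · exact hs (deg H f) f (fun ν hν => le_deg H hν) hf
  intro δ
  induction δ using WellFounded.induction H.wf with
  | _ δ IH =>
  intro f hsupp hmem
  rcases eq_or_ne f 0 with rfl | h0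
  · exact zero_mem _
  have hprodne : r i * f ≠ 0 := Stmt12.mul_ne_zero' H (hr i) h0
  obtain ⟨j, hjk, hjle⟩ := stmt12_key2' H r hr lm hlm hcop (i : ℕ) hmem hprodne
  have hji : j ≠ i := fun h => by rw [h] at hjk; omega
  have hdegprod : deg H (r i * f) = lm i + deg H f := by
    rw [deg_mul H (hr i) h0, hdegr i]
  rw [hdegprod] at hjle
  have hjf : lm j ≤ deg H f := by
    intro s
    rcases hcop j i hji s with h' | h'
    · simp [h']
    · have := hjle s
      rw [Finsupp.add_apply, h'] at this
      simpa using this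
  set μ := deg H f with hμ
  set c := coeff μ f with hcd
  set a := coeff (lm j) (r j) with ha
  have hcne : c ≠ 0 := coeff_deg_ne_zero H h0
  have hane : a ≠ 0 := mem_support_iff.1 (hlm j).1
  set q : MvPolynomial (Fin m) K := monomial (μ - lm j) (c / a) with hq
  have hqne : q ≠ 0 := by
    rw [hq]
    exact fun hc0 => (div_ne_zero hcne hane) (by
      simpa using (MvPolynomial.monomial_eq_zero).1 hc0)
  have hql : (μ - lm j) + lm j = μ := by
    ext s
    rw [Finsupp.add_apply, Finsupp.tsub_apply]
    have := hjf s; omega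
  set f₁ := f - q * r j with hf₁
  have hqrImem : q * r j ∈ Ik r (i : ℕ) := Ideal.mul_mem_left _ _ (r_mem_Ik hjk)
  have hmem1 : r i * f₁ ∈ Ik r (i : ℕ) := by
    rw [hf₁, mul_sub]
    exact sub_mem hmem (Ideal.mul_mem_left _ _ hqrImem)
  have hsupp1 : ∀ ν ∈ f₁.support, lt ν μ := by
    intro ν hν
    have hcν : coeff ν f₁ ≠ 0 := mem_support_iff.1 hν
    rw [hf₁, coeff_sub] at hcν
    have h1 : coeff μ (q * r j) = c := by
      have h2 := coeff_monomial_mul (lm j) (μ - lm j) (c / a) (r j)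
      rw [hql] at h2
      rw [hq, h2, ← ha, div_mul_cancel₀ _ hane]
    have hνμ : ν ≠ μ := by
      rintro rfl
      rw [h1] at hcν
      exact hcν (by rw [← hcd]; ring)
    have : coeff ν f ≠ 0 ∨ coeff ν (q * r j) ≠ 0 := by
      by_contra hc0
      push_neg at hc0
      rw [hc0.1, hc0.2] at hcν; simp at hcν
    rcases this with h' | h'
    · rcases le_deg H (mem_support_iff.2 h') with h'' | h''
      · exact h''
      · exact absurd h'' hνμ
    · have h1 : wle lt ν (deg H q + deg H (r j)) :=
        support_mul_le H hqne (hr j) (mem_support_iff.2 h')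
      rw [hq, deg_monomial H (div_ne_zero hcne hane), hdegr j, hql] at h1
      rcases h1 with h'' | h''
      · exact h''
      · exact absurd h'' hνμ
  rcases eq_or_ne f₁ 0 with hf₁0 | hf₁0
  · have : f = q * r j := by
      rw [hf₁] at hf₁0
      exact sub_eq_zero.1 hf₁0
    rw [this]; exact hqrImem
  · have hδ'lt : lt (deg H f₁) δ := by
      have h1 : lt (deg H f₁) μ := hsupp1 _ (deg_mem H hf₁0)
      have h2 : wle lt μ δ := hsupp μ (deg_mem H h0)
      exact H.lt_wle_trans h1 h2
    have hf₁mem : f₁ ∈ Ik r (i : ℕ) :=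
      IH (deg H f₁) hδ'lt f₁ (fun ν hν => le_deg H hν) hmem1
    have : f = f₁ + q * r j := by rw [hf₁]; ring
    rw [this]
    exact add_mem hf₁mem hqrImem

end Main

/-- let `R = K[x₁,…,x_m]` be a polynomial ring over a field and
let `lt` be (the strict order of) an admissible monomial order on exponent
vectors: a strict total order compatible with addition and having `0` as least
element.  If the nonzero polynomials `r 0, …, r (n-1)` have leading monomials
(maximal support elements w.r.t. `lt`) that are pairwise coprime, then
`r 0, …, r (n-1)` is a regular sequence. -/
theorem stmt_12 {K : Type*} [Field K] (m n : ℕ)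
    (lt : (Fin m →₀ ℕ) → (Fin m →₀ ℕ) → Prop)
    (hto : IsTrichotomous (Fin m →₀ ℕ) lt) (htr : IsTrans (Fin m →₀ ℕ) lt)
    (hirr : IsIrrefl (Fin m →₀ ℕ) lt)
    (hadd : ∀ a b c : Fin m →₀ ℕ, lt a b → lt (a + c) (b + c))
    (hzero : ∀ a : Fin m →₀ ℕ, a ≠ 0 → lt 0 a)
    (r : Fin n → MvPolynomial (Fin m) K)
    (hr : ∀ i, r i ≠ 0)
    (lm : Fin n → (Fin m →₀ ℕ))
    (hlm : ∀ i, lm i ∈ (r i).support ∧ ∀ μ ∈ (r i).support, μ ≠ lm i → lt μ (lm i))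
    (hcop : ∀ i j, i ≠ j → ∀ s : Fin m, lm i s = 0 ∨ lm j s = 0) :
    RingTheory.Sequence.IsWeaklyRegular (MvPolynomial (Fin m) K) (List.ofFn r) := by
  classical
  have H : Stmt12.Adm lt :=
    ⟨trichotomous_of lt, fun {a b c} h h' => htr.trans a b c h h', hirr.irrefl,
      hadd, hzero⟩
  constructor
  intro i hi
  rw [List.length_ofFn] at hi
  set i' : Fin n := ⟨i, hi⟩ with hi'
  have hgetElem : (List.ofFn r)[i]'(by rw [List.length_ofFn]; exact hi) = r i' := by
    simp [List.getElem_ofFn]; rfl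
  have hIkeq : Ideal.ofList ((List.ofFn r).take i) = Ik r i := by
    apply le_antisymm
    · rw [Ideal.span_le]
      intro x hx
      obtain ⟨a, ha, hget⟩ := List.mem_iff_getElem.1 hx
      rw [List.length_take, List.length_ofFn] at ha
      have ha' : a < n := lt_of_lt_of_le ha (min_le_right _ _)
      have hai : a < i := lt_of_lt_of_le ha (min_le_left _ _)
      have : x = r ⟨a, ha'⟩ := by
        rw [← hget, List.getElem_take, List.getElem_ofFn]
      rw [this]
      exact r_mem_Ik hai
    · rw [Ik, Ideal.span_le]
      rintro x ⟨j, rfl⟩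
      show (if (j : ℕ) < i then r j else 0) ∈ Ideal.ofList ((List.ofFn r).take i)
      by_cases hj : (j : ℕ) < i
      · rw [if_pos hj]
        apply Ideal.subset_span
        refine List.mem_iff_getElem.2 ⟨(j : ℕ), ?_, ?_⟩
        · rw [List.length_take, List.length_ofFn]; omega
        · rw [List.getElem_take, List.getElem_ofFn]
      · rw [if_neg hj]
        exact zero_mem _
  intro a b hab
  obtain ⟨a, rfl⟩ := Submodule.Quotient.mk_surjective _ a
  obtain ⟨b, rfl⟩ := Submodule.Quotient.mk_surjective _ b
  simp only at hab
  rw [← Submodule.Quotient.mk_smul, ← Submodule.Quotient.mk_smul,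
    Submodule.Quotient.eq] at hab
  have hmemIk : ∀ x : MvPolynomial (Fin m) K,
      x ∈ (Ideal.ofList ((List.ofFn r).take i) • ⊤ :
        Submodule (MvPolynomial (Fin m) K) (MvPolynomial (Fin m) K)) ↔ x ∈ Ik r i := by
    intro x
    rw [smul_eq_mul, Ideal.mul_top, hIkeq]
  rw [hmemIk] at hab
  have hab' : r i' * (a - b) ∈ Ik r i := by
    have : (List.ofFn r)[i]'(by rw [List.length_ofFn]; exact hi) • a
        - (List.ofFn r)[i]'(by rw [List.length_ofFn]; exact hi) • b
        = r i' * (a - b) := by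
      rw [hgetElem]; simp [smul_eq_mul]; ring
    rwa [this] at hab
  have : a - b ∈ Ik r i := by
    have := stmt12_key3 H r hr lm hlm hcop i' (a - b)
    simp only [hi'] at this
    exact this hab'
  rw [Submodule.Quotient.eq, hmemIk]
  exact this
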